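/- Let 0 < ε < min{1, M/(2n + 1 + 8n/h² + 2α + 8β)}. Suppose at time T₀ the state (x_l(T₀), v_l(T₀)) satisfies |v_l(T₀)| < ε and |Δ_D x(·,T₀)(l)| < ε for all l ∈ Λ̄. For each l set T_{1,l} = T₀ + |v_l(T₀)|/ε and T₁ = max_l T_{1,l}, and define v_l(t) = v_l(T₀) − ε(t − T₀) v_l(T₀)/|v_l(T₀)| for t ∈ [T₀, T_{1,l}] and v_l(t) = 0 for t ∈ (T_{1,l}, T₁], x_l(t) = x_l(T₀) + ∫_{T₀}^t v_l(s) ds, and u_l(t) = v̇_l(t) − Δ_D x(·,t)(l) − (α − β v_l(t)²) v_l(t). Then (x_l, v_l, u_l) solves the controlled discrete Klein–Gordon system on (T₀, T₁], v_l(T₁) = 0 for all l, and the control is admissible with strict bound: |u_l(t)| ≤ ε(2n + 1 + 8n/h² + 2α + 8β ε²) < M for all l and t ∈ (T₀, T₁]. -/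

import Mathlib

open Finset Filter

/-- The discrete torus `(ℤ/Dℤ)^n`. -/
abbrev Site (D n : ℕ) : Type := Fin n → ZMod D

/-- Sum over the `2n` neighbors `l ± e_k` of a site `l`. -/
noncomputable def nbrSum {D n : ℕ} (g : Site D n → ℝ) (l : Site D n) : ℝ :=
  ∑ k : Fin n, (g (Function.update l k (l k + 1)) + g (Function.update l k (l k - 1)))

/-- The discrete Laplacian `Δ_D f(l) = Σ_{l'∼l} (f(l') − f(l))/h²` with `h = 1/D`. -/
noncomputable def lap {D n : ℕ} (f : Site D n → ℝ) (l : Site D n) : ℝ :=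
  nbrSum (fun l' => (f l' - f l) / ((1 : ℝ) / (D : ℝ)) ^ 2) l

lemma lap_add' {D n : ℕ} (f g : Site D n → ℝ) (l : Site D n) :
    lap (fun l' => f l' + g l') l = lap f l + lap g l := by
  simp only [lap, nbrSum, ← Finset.sum_add_distrib]
  exact Finset.sum_congr rfl fun k _ => by ring

lemma abs_nbrSum_le' {D n : ℕ} (g : Site D n → ℝ) (C : ℝ) (hg : ∀ l', |g l'| ≤ C)
    (l : Site D n) : |nbrSum g l| ≤ 2 * n * C := by
  have h1 : |nbrSum g l| ≤ ∑ _k : Fin n, (2 * C) := by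
    refine le_trans (Finset.abs_sum_le_sum_abs _ _) (Finset.sum_le_sum ?_)
    intro k _
    calc |g (Function.update l k (l k + 1)) + g (Function.update l k (l k - 1))|
        ≤ |g (Function.update l k (l k + 1))| + |g (Function.update l k (l k - 1))| :=
          abs_add_le _ _
      _ ≤ 2 * C := by
          linarith [hg (Function.update l k (l k + 1)), hg (Function.update l k (l k - 1))]
  rw [Finset.sum_const, Finset.card_univ, Fintype.card_fin, nsmul_eq_mul] at h1
  linarith

lemma final_bound' (nR h2 α β M ε : ℝ) (hh2 : 0 < h2) (hn1 : 1 ≤ nR)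
    (hα : 0 < α) (hβ : 0 < β) (hε₀ : 0 < ε) (hε1 : ε < 1)
    (hε2 : ε < M / (2 * nR + 1 + 8 * nR / h2 + 2 * α + 8 * β)) :
    ε * (2 * nR + 1 + 8 * nR / h2 + 2 * α + 8 * β * ε ^ 2) < M := by
  have hr : 0 ≤ 8 * nR / h2 := by positivity
  have hB : 0 < 2 * nR + 1 + 8 * nR / h2 + 2 * α + 8 * β := by linarith
  have h1 : ε * (2 * nR + 1 + 8 * nR / h2 + 2 * α + 8 * β) < M :=
    (lt_div_iff₀ hB).mp hε2
  have h2' : ε ^ 2 < 1 := by nlinarith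
  nlinarith [mul_nonneg (mul_nonneg hβ.le hε₀.le) (sub_nonneg.mpr h2'.le)]

/-- The second stage of the flocking control: starting from small velocities and
small discrete Laplacian at time `T₀`, the explicit deceleration trajectories
together with the induced forcing solve the controlled discrete Klein–Gordon
system on `(T₀, T₁]`, bring all velocities to `0` at `T₁`, and the control is
admissible with the strict bound `|u_l| ≤ ε(2n + 1 + 8n/h² + 2α + 8βε²) < M`. -/
theorem deceleration_stage (D n : ℕ) [NeZero D] (hn : 1 ≤ n)
    (α β M : ℝ) (hα : 0 < α) (hβ : 0 < β) (hM : 0 < M)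
    (ε T₀ : ℝ) (hε₀ : 0 < ε)
    (hε : ε < min 1
      (M / (2 * n + 1 + 8 * n / ((1 : ℝ) / (D : ℝ)) ^ 2 + 2 * α + 8 * β)))
    (X V : Site D n → ℝ)
    (hV : ∀ l, |V l| < ε) (hX : ∀ l, |lap X l| < ε) :
    let T1 : Site D n → ℝ := fun l => T₀ + |V l| / ε
    let Tmax : ℝ := Finset.univ.sup' Finset.univ_nonempty T1
    let v : Site D n → ℝ → ℝ := fun l t =>
      if t ≤ T1 l then V l - ε * (t - T₀) * (V l / |V l|) else 0
    let x : Site D n → ℝ → ℝ := fun l t => X l + ∫ s in T₀..t, v l s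
    let u : Site D n → ℝ → ℝ := fun l t =>
      (if t ≤ T1 l then -ε * (V l / |V l|) else 0)
        - lap (fun l' => x l' t) l - (α - β * (v l t) ^ 2) * v l t
    (∀ l : Site D n, ∀ t ∈ Set.Ioc T₀ Tmax,
      HasDerivWithinAt (x l) (v l t) (Set.Iic t) t ∧
      HasDerivWithinAt (v l)
        (lap (fun l' => x l' t) l + (α - β * (v l t) ^ 2) * v l t + u l t)
        (Set.Iic t) t) ∧
    (∀ l : Site D n, v l Tmax = 0) ∧
    (∀ l : Site D n, ∀ t ∈ Set.Ioc T₀ Tmax,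
      |u l t| ≤ ε * (2 * n + 1 + 8 * n / ((1 : ℝ) / (D : ℝ)) ^ 2 + 2 * α + 8 * β * ε ^ 2)) ∧
    ε * (2 * n + 1 + 8 * n / ((1 : ℝ) / (D : ℝ)) ^ 2 + 2 * α + 8 * β * ε ^ 2) < M := by
  intro T1 Tmax v x u
  have hD : (0 : ℝ) < (D : ℝ) := by
    exact_mod_cast Nat.pos_of_ne_zero (NeZero.ne D)
  set h2 : ℝ := ((1 : ℝ) / (D : ℝ)) ^ 2 with hh2
  have hh2pos : 0 < h2 := by positivity
  have hn1 : (1 : ℝ) ≤ (n : ℝ) := by exact_mod_cast hn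
  have hε1 : ε < 1 := lt_of_lt_of_le hε (min_le_left _ _)
  have hε2 : ε < M / (2 * n + 1 + 8 * n / h2 + 2 * α + 8 * β) :=
    lt_of_lt_of_le hε (min_le_right _ _)
  -- the affine portion vanishes at `T1 l`
  have hzero : ∀ l : Site D n, V l - ε * (T1 l - T₀) * (V l / |V l|) = 0 := by
    intro l
    rcases eq_or_ne (V l) 0 with h0 | h0
    · simp [h0]
    · have hVpos : |V l| ≠ 0 := abs_ne_zero.mpr h0
      have h1 : ε * (T1 l - T₀) = |V l| := by
        simp only [T1]
        field_simp
        ring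
      rw [h1, mul_comm, div_mul_cancel₀ _ hVpos, sub_self]
  -- continuity of each velocity
  have hvcont : ∀ l : Site D n, Continuous (v l) := by
    intro l
    have : Continuous fun t : ℝ => V l - ε * (t - T₀) * (V l / |V l|) := by fun_prop
    refine Continuous.if_le this continuous_const continuous_id continuous_const ?_
    intro t ht
    rw [ht]
    exact hzero l
  -- pointwise bound on the velocity
  have hvsgn : ∀ (l : Site D n) (s : ℝ), T₀ ≤ s → |v l s| ≤ |V l| := by
    intro l s hs
    simp only [v]
    split_ifs with h
    · rcases eq_or_ne (V l) 0 with h0 | h0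
      · simp [h0]
      · have hVpos : 0 < |V l| := abs_pos.mpr h0
        have h1 : V l - ε * (s - T₀) * (V l / |V l|)
            = (V l / |V l|) * (|V l| - ε * (s - T₀)) := by
          field_simp
        have hle : ε * (s - T₀) ≤ |V l| := by
          have hs1 : s - T₀ ≤ |V l| / ε := by
            simp only [T1] at h; linarith
          have h2'' := mul_le_mul_of_nonneg_left hs1 hε₀.le
          have h3'' : ε * (|V l| / ε) = |V l| := by field_simp
          linarith
        have hge : 0 ≤ ε * (s - T₀) := mul_nonneg hε₀.le (by linarith)
        rw [h1, abs_mul, abs_div, abs_abs, div_self hVpos.ne', one_mul, abs_le]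
        constructor <;> linarith [abs_nonneg (V l)]
    · simp only [abs_zero]
      exact abs_nonneg (V l)
  have hT1le : ∀ l : Site D n, T1 l ≤ Tmax := fun l => Finset.le_sup' T1 (Finset.mem_univ l)
  have hT₀T1 : ∀ l : Site D n, T₀ ≤ T1 l := by
    intro l
    simp only [T1]
    have : 0 ≤ |V l| / ε := div_nonneg (abs_nonneg _) hε₀.le
    linarith
  have hTmax1 : Tmax ≤ T₀ + 1 := by
    apply Finset.sup'_le
    intro l _
    have : |V l| / ε ≤ 1 := by
      rw [div_le_one hε₀]; exact (hV l).le
    simp only [T1]; linarith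
  -- bound on the integral of the velocity
  have hI : ∀ (l : Site D n) (t : ℝ), t ∈ Set.Ioc T₀ Tmax → |∫ s in T₀..t, v l s| ≤ ε := by
    intro l t ht
    have h1 : ∀ s ∈ Set.uIoc T₀ t, ‖v l s‖ ≤ ε := by
      intro s hs
      rw [Set.uIoc_of_le ht.1.le] at hs
      exact le_trans (hvsgn l s hs.1.le) (hV l).le
    have h2' := intervalIntegral.norm_integral_le_of_norm_le_const h1
    have h3 : |t - T₀| ≤ 1 := by
      rw [abs_of_nonneg (by linarith [ht.1] : (0 : ℝ) ≤ t - T₀)]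
      linarith [ht.2]
    calc |∫ s in T₀..t, v l s| ≤ ε * |t - T₀| := h2'
      _ ≤ ε * 1 := by nlinarith
      _ = ε := mul_one ε
  -- bound on the laplacian of the positions
  have hlapx : ∀ (l : Site D n) (t : ℝ), t ∈ Set.Ioc T₀ Tmax →
      |lap (fun l' => x l' t) l| ≤ ε + 2 * n * (2 * ε / h2) := by
    intro l t ht
    have hsplit : lap (fun l' => x l' t) l
        = lap X l + lap (fun l' => ∫ s in T₀..t, v l' s) l := by
      simp only [x]
      exact lap_add' X (fun l' => ∫ s in T₀..t, v l' s) l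
    set I : Site D n → ℝ := fun l' => ∫ s in T₀..t, v l' s with hIdef
    have hbnd : ∀ l' : Site D n, |(I l' - I l) / ((1 : ℝ) / (D : ℝ)) ^ 2| ≤ 2 * ε / h2 := by
      intro l'
      rw [abs_div, ← hh2, abs_of_pos hh2pos]
      gcongr
      calc |I l' - I l| ≤ |I l'| + |I l| := abs_sub _ _
        _ ≤ 2 * ε := by linarith [hI l' t ht, hI l t ht]
    have := abs_nbrSum_le' (fun l' => (I l' - I l) / ((1 : ℝ) / (D : ℝ)) ^ 2)
      (2 * ε / h2) hbnd l
    rw [hsplit]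
    calc |lap X l + lap I l| ≤ |lap X l| + |lap I l| := abs_add_le _ _
      _ ≤ ε + 2 * n * (2 * ε / h2) := by
          refine add_le_add (hX l).le ?_
          exact this
  -- the driving term is bounded by ε
  have hw : ∀ (l : Site D n) (t : ℝ), |(if t ≤ T1 l then -ε * (V l / |V l|) else 0)| ≤ ε := by
    intro l t
    have hsgn : abs (V l / |V l|) ≤ 1 := by
      rcases eq_or_ne (V l) 0 with h0 | h0
      · simp [h0]
      · rw [abs_div, abs_abs, div_self (abs_ne_zero.mpr h0)]
    split_ifs with h
    · rw [abs_mul, abs_neg, abs_of_pos hε₀]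
      nlinarith [abs_nonneg (V l / |V l|)]
    · simpa using hε₀.le
  refine ⟨?_, ?_, ?_, ?_⟩
  · -- the ODE system
    intro l t ht
    constructor
    · -- derivative of x
      have hint : IntervalIntegrable (v l) MeasureTheory.volume T₀ t :=
        (hvcont l).intervalIntegrable T₀ t
      have hd := intervalIntegral.integral_hasDerivAt_right hint
        ((hvcont l).stronglyMeasurableAtFilter _ _) (hvcont l).continuousAt
      exact ((hd.const_add (X l)).hasDerivWithinAt : _)
    · -- derivative of v
      have hwd : HasDerivWithinAt (v l)
          (if t ≤ T1 l then -ε * (V l / |V l|) else 0) (Set.Iic t) t := by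
        rcases le_or_gt t (T1 l) with h1 | h1
        · rw [if_pos h1]
          have hg : HasDerivAt (fun s : ℝ => V l - ε * (s - T₀) * (V l / |V l|))
              (-ε * (V l / |V l|)) t := by
            have ha : HasDerivAt (fun s : ℝ => ε * (s - T₀) * (V l / |V l|))
                (ε * (V l / |V l|)) t := by
              simpa using (((hasDerivAt_id t).sub_const T₀).const_mul ε).mul_const
                (V l / |V l|)
            simpa [neg_mul] using ha.const_sub (V l)
          refine hg.hasDerivWithinAt.congr ?_ ?_
          · intro y hy
            simp only [v]
            rw [if_pos ((Set.mem_Iic.mp hy).trans h1)]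
          · simp only [v]
            rw [if_pos h1]
        · rw [if_neg (not_le.mpr h1)]
          have hev : v l =ᶠ[nhdsWithin t (Set.Iic t)] fun _ => (0 : ℝ) := by
            filter_upwards [(eventually_gt_nhds h1).filter_mono nhdsWithin_le_nhds] with s hs
            simp only [v]
            rw [if_neg (not_le.mpr hs)]
          refine (hasDerivWithinAt_const t _ (0 : ℝ)).congr_of_eventuallyEq hev ?_
          simp only [v]
          rw [if_neg (not_le.mpr h1)]
      have heq : lap (fun l' => x l' t) l + (α - β * v l t ^ 2) * v l t + u l t
          = (if t ≤ T1 l then -ε * (V l / |V l|) else 0) := by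
        simp only [u]
        ring
      rw [heq]
      exact hwd
  · -- velocities vanish at Tmax
    intro l
    simp only [v]
    split_ifs with h
    · have : Tmax = T1 l := le_antisymm h (hT1le l)
      rw [this]
      exact hzero l
    · rfl
  · -- the control bound
    intro l t ht
    have hvle : |v l t| ≤ ε := le_trans (hvsgn l t ht.1.le) (hV l).le
    have hv2 : v l t ^ 2 ≤ ε ^ 2 := by
      rw [← sq_abs]
      exact pow_le_pow_left₀ (abs_nonneg _) hvle 2
    have hP : |(α - β * v l t ^ 2) * v l t| ≤ (α + β * ε ^ 2) * ε := by
      rw [abs_mul]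
      apply mul_le_mul _ hvle (abs_nonneg _) (by positivity)
      rw [abs_le]
      constructor <;> nlinarith [sq_nonneg (v l t)]
    have hL := hlapx l t ht
    have hU : |u l t| ≤ ε + (ε + 2 * n * (2 * ε / h2)) + (α + β * ε ^ 2) * ε := by
      simp only [u]
      calc |(if t ≤ T1 l then -ε * (V l / |V l|) else 0)
            - lap (fun l' => x l' t) l - (α - β * v l t ^ 2) * v l t|
          ≤ |(if t ≤ T1 l then -ε * (V l / |V l|) else 0) - lap (fun l' => x l' t) l|
            + |(α - β * v l t ^ 2) * v l t| := abs_sub _ _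
        _ ≤ (|(if t ≤ T1 l then -ε * (V l / |V l|) else 0)| + |lap (fun l' => x l' t) l|)
            + |(α - β * v l t ^ 2) * v l t| := by
              gcongr
              exact abs_sub _ _
        _ ≤ ε + (ε + 2 * n * (2 * ε / h2)) + (α + β * ε ^ 2) * ε := by
              linarith [hP, hL, hw l t]
    refine le_trans hU ?_
    have hr : 0 ≤ (n : ℝ) / h2 * ε := by positivity
    have hb3 : 0 ≤ β * ε ^ 3 := by positivity
    have hae : 0 ≤ α * ε := by positivity
    have hne : ε ≤ ε * n := by simpa using mul_le_mul_of_nonneg_left hn1 hε₀.le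
    have expand1 : ε * (2 * n + 1 + 8 * n / h2 + 2 * α + 8 * β * ε ^ 2)
        = 2 * (ε * n) + ε + 8 * ((n : ℝ) / h2 * ε) + 2 * (α * ε) + 8 * (β * ε ^ 3) := by
      ring
    have expand2 : ε + (ε + 2 * (n : ℝ) * (2 * ε / h2)) + (α + β * ε ^ 2) * ε
        = 2 * ε + 4 * ((n : ℝ) / h2 * ε) + α * ε + β * ε ^ 3 := by
      ring
    rw [expand1]
    rw [expand2]
    linarith
  · -- strict admissibility
    exact final_bound' (n : ℝ) h2 α β M ε hh2pos hn1 hα hβ hε₀ hε1 hε2
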